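/- For odd n ≥ 7, no permutation in S_n conjugates the n-cycle x = (1 2 … n) to x⁻¹ and simultaneously conjugates the 3-cycle y = (1 2 4) to y⁻¹. -/

import Mathlib

open Equiv List

/-- For odd `n ≥ 7`, no permutation in `S_n` simultaneously conjugates the `n`-cycle
`x = (1 2 … n)` to `x⁻¹` and the 3-cycle `y = (1 2 4)` to `y⁻¹`.
(Points are labelled `0,…,n−1`.) -/
theorem stmt_11 (n : ℕ) (hn : 7 ≤ n) (hodd : Odd n) :
    ¬ ∃ g : Equiv.Perm (Fin n),
        g * (List.finRange n).formPerm * g⁻¹ = ((List.finRange n).formPerm)⁻¹ ∧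
        g * ([(⟨0, by omega⟩ : Fin n), ⟨1, by omega⟩, ⟨3, by omega⟩]).formPerm * g⁻¹ =
          (([(⟨0, by omega⟩ : Fin n), ⟨1, by omega⟩, ⟨3, by omega⟩]).formPerm)⁻¹ := by
  rintro ⟨g, h1, h2⟩
  have p0 : (0:ℕ) < n := by omega
  have p1 : (1:ℕ) < n := by omega
  have p2 : (2:ℕ) < n := by omega
  have p3 : (3:ℕ) < n := by omega
  set x : Equiv.Perm (Fin n) := (List.finRange n).formPerm with hxdef
  set y : Equiv.Perm (Fin n) :=
    ([(⟨0, p0⟩ : Fin n), ⟨1, p1⟩, ⟨3, p3⟩]).formPerm with hydef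
  -- x sends i to i+1 mod n
  have hx : ∀ i : Fin n, x i = ⟨(i.val + 1) % n, Nat.mod_lt _ (by omega)⟩ := by
    intro i
    have h := List.formPerm_apply_getElem (List.finRange n) (List.nodup_finRange n) i.val
      (by simp [i.isLt])
    simpa using h
  -- from h1 : x * g * x = g
  have hgx : ∀ i : Fin n, x (g (x i)) = g i := by
    intro i
    have : x * (g * x * g⁻¹) * g = x * x⁻¹ * g := by rw [h1]
    simp only [mul_inv_cancel, one_mul, mul_assoc, inv_mul_cancel_left] at this
    have := Equiv.congr_fun this i
    simpa [Equiv.Perm.mul_apply] using this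
  -- from h2 : y * g * y = g
  have hgy : ∀ i : Fin n, y (g (y i)) = g i := by
    intro i
    have : y * (g * y * g⁻¹) * g = y * y⁻¹ * g := by rw [h2]
    simp only [mul_inv_cancel, one_mul, mul_assoc, inv_mul_cancel_left] at this
    have := Equiv.congr_fun this i
    simpa [Equiv.Perm.mul_apply] using this
  -- evaluate y at 0,1,3 and fixed points
  have hy0 : y ⟨0, p0⟩ = ⟨1, p1⟩ := by
    simp [hydef, List.formPerm_cons_cons, List.formPerm_pair, Equiv.swap_apply_def, Fin.ext_iff]
  have hy1 : y ⟨1, p1⟩ = ⟨3, p3⟩ := by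
    simp [hydef, List.formPerm_cons_cons, List.formPerm_pair, Equiv.swap_apply_def, Fin.ext_iff]
  have hy3 : y ⟨3, p3⟩ = ⟨0, p0⟩ := by
    simp [hydef, List.formPerm_cons_cons, List.formPerm_pair, Equiv.swap_apply_def, Fin.ext_iff]
  have hyfix : ∀ v : Fin n, v.val ≠ 0 → v.val ≠ 1 → v.val ≠ 3 → y v = v := by
    intro v h0 h1 h3
    apply List.formPerm_apply_of_notMem
    simp only [List.mem_cons, List.not_mem_nil, or_false, Fin.ext_iff]
    push_neg
    exact ⟨h0, h1, h3⟩
  -- key equations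
  have e1 : y (g ⟨1, p1⟩) = g ⟨0, p0⟩ := by
    have := hgy ⟨0, p0⟩; rwa [hy0] at this
  have e3 : y (g ⟨0, p0⟩) = g ⟨3, p3⟩ := by
    have := hgy ⟨3, p3⟩; rwa [hy3] at this
  -- chain from hgx
  have c0 : ((g ⟨1, p1⟩).val + 1) % n = (g ⟨0, p0⟩).val := by
    have := hgx ⟨0, p0⟩
    rw [hx ⟨0, p0⟩] at this
    have h2' : ((1 : ℕ) + 1) % n = 2 % n := rfl
    simp only [Nat.mod_eq_of_lt (show (0:ℕ)+1 < n by omega)] at this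
    rw [hx] at this
    exact (Fin.ext_iff.mp this)
  have c1 : ((g ⟨2, p2⟩).val + 1) % n = (g ⟨1, p1⟩).val := by
    have := hgx ⟨1, p1⟩
    rw [hx ⟨1, p1⟩] at this
    simp only [Nat.mod_eq_of_lt (show (1:ℕ)+1 < n by omega)] at this
    rw [hx] at this
    exact (Fin.ext_iff.mp this)
  have c2 : ((g ⟨3, p3⟩).val + 1) % n = (g ⟨2, p2⟩).val := by
    have := hgx ⟨2, p2⟩
    rw [hx ⟨2, p2⟩] at this
    simp only [Nat.mod_eq_of_lt (show (2:ℕ)+1 < n by omega)] at this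
    rw [hx] at this
    exact (Fin.ext_iff.mp this)
  -- mod-free versions
  have modfact : ∀ m k : ℕ, m < n → (m + 1) % n = k → (m + 1 = n ∧ k = 0) ∨ k = m + 1 := by
    intro m k hm hk
    rcases Nat.lt_or_ge (m + 1) n with h | h
    · right; rw [Nat.mod_eq_of_lt h] at hk; omega
    · left
      have hmn : m + 1 = n := by omega
      rw [hmn, Nat.mod_self] at hk
      omega
  have ha : (g ⟨0, p0⟩).val < n := (g ⟨0, p0⟩).isLt
  have hblt : (g ⟨1, p1⟩).val < n := (g ⟨1, p1⟩).isLt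
  have hc : (g ⟨2, p2⟩).val < n := (g ⟨2, p2⟩).isLt
  have hd : (g ⟨3, p3⟩).val < n := (g ⟨3, p3⟩).isLt
  have c0' := modfact _ _ hblt c0
  have c1' := modfact _ _ hc c1
  have c2' := modfact _ _ hd c2
  by_cases hb0 : (g ⟨1, p1⟩).val = 0
  · have hg1 : g ⟨1, p1⟩ = ⟨0, p0⟩ := Fin.ext hb0
    rw [hg1, hy0] at e1
    have hg3 : g ⟨3, p3⟩ = ⟨3, p3⟩ := by
      rw [← e1, hy1] at e3; exact e3.symm
    have d1 : (g ⟨0, p0⟩).val = 1 := by rw [← e1]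
    have d3 : (g ⟨3, p3⟩).val = 3 := by rw [hg3]
    omega
  · by_cases hb1 : (g ⟨1, p1⟩).val = 1
    · have hg1 : g ⟨1, p1⟩ = ⟨1, p1⟩ := Fin.ext hb1
      rw [hg1, hy1] at e1
      have : (g ⟨0, p0⟩).val = 3 := by rw [← e1]
      omega
    · by_cases hb3 : (g ⟨1, p1⟩).val = 3
      · have hg1 : g ⟨1, p1⟩ = ⟨3, p3⟩ := Fin.ext hb3
        rw [hg1, hy3] at e1
        have : (g ⟨0, p0⟩).val = 0 := by rw [← e1]
        omega
      · rw [hyfix _ hb0 hb1 hb3] at e1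
        have := Fin.ext_iff.mp e1
        omega
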